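/- arXiv:0709.3446 — 2 statements merged into one kernel-verified Lean document; each statement's English description precedes it below -/
import Mathlib

section
/- For all real numbers p > 0 and q > 0, ∫_{-∞}^{∞} ((1+e^{-x})^{-p} - (1+e^{-x})^{-q}) dx = ψ(q) - ψ(p). -/
open MeasureTheory Real

open Set Filter

/-- The digamma function `ψ(x) = Γ'(x)/Γ(x)`. -/
noncomputable def digamma (x : ℝ) : ℝ := deriv Real.Gamma x / Real.Gamma x

lemma Gamma_diffAt {x : ℝ} (hx : 0 < x) : DifferentiableAt ℝ Real.Gamma x :=
  Real.differentiableAt_Gamma fun m =>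
    (((neg_nonpos.mpr (Nat.cast_nonneg m)).trans_lt hx).ne')

lemma hasDerivAt_logGamma {x : ℝ} (hx : 0 < x) :
    HasDerivAt (Real.log ∘ Real.Gamma) (digamma x) x :=
  ((Gamma_diffAt hx).hasDerivAt).log (Real.Gamma_pos_of_pos hx).ne'

lemma logGamma_slope {x : ℝ} (hx : 0 < x) :
    Real.log (Real.Gamma (x + 1)) - Real.log (Real.Gamma x) = Real.log x := by
  rw [Real.Gamma_add_one hx.ne', Real.log_mul hx.ne' (Real.Gamma_pos_of_pos hx).ne']
  ring

lemma digamma_le_log {x : ℝ} (hx : 0 < x) : digamma x ≤ Real.log x := by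
  have h := Real.convexOn_log_Gamma.le_slope_of_hasDerivAt (Set.mem_Ioi.2 hx)
    (Set.mem_Ioi.2 (by linarith : (0:ℝ) < x + 1)) (by linarith)
    (hasDerivAt_logGamma hx)
  rwa [slope_def_field, Function.comp_apply, Function.comp_apply, add_sub_cancel_left,
    div_one, logGamma_slope hx] at h

lemma log_le_digamma {x : ℝ} (hx : 0 < x) : Real.log x ≤ digamma (x + 1) := by
  have h := Real.convexOn_log_Gamma.slope_le_of_hasDerivAt (Set.mem_Ioi.2 hx)
    (Set.mem_Ioi.2 (by linarith : (0:ℝ) < x + 1)) (by linarith)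
    (hasDerivAt_logGamma (by linarith))
  rwa [slope_def_field, Function.comp_apply, Function.comp_apply, add_sub_cancel_left,
    div_one, logGamma_slope hx] at h

lemma digamma_add_one {x : ℝ} (hx : 0 < x) : digamma (x + 1) = digamma x + 1 / x := by
  have hΓ : HasDerivAt Real.Gamma (deriv Real.Gamma x) x := (Gamma_diffAt hx).hasDerivAt
  have h1 : HasDerivAt (fun y => Real.Gamma (y + 1)) (deriv Real.Gamma (x + 1) * 1) x :=
    HasDerivAt.comp x (Gamma_diffAt (by linarith)).hasDerivAt ((hasDerivAt_id x).add_const 1)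
  have h2 : HasDerivAt (fun y => y * Real.Gamma y)
      (1 * Real.Gamma x + x * deriv Real.Gamma x) x := (hasDerivAt_id x).mul hΓ
  have h3 : (fun y => y * Real.Gamma y) =ᶠ[nhds x] (fun y => Real.Gamma (y + 1)) := by
    filter_upwards [eventually_gt_nhds hx] with y hy
    rw [Real.Gamma_add_one hy.ne']
  have h4 := h2.congr_of_eventuallyEq h3.symm
  have h5 : deriv Real.Gamma (x + 1) * 1 = 1 * Real.Gamma x + x * deriv Real.Gamma x :=
    h1.unique h4
  have hΓx : Real.Gamma x ≠ 0 := (Real.Gamma_pos_of_pos hx).ne'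
  have hΓx1 : Real.Gamma (x + 1) = x * Real.Gamma x := Real.Gamma_add_one hx.ne'
  unfold digamma
  rw [mul_one] at h5
  rw [hΓx1, h5]
  field_simp
  ring

lemma digamma_add_nat {x : ℝ} (hx : 0 < x) (N : ℕ) :
    digamma (x + N) = digamma x + ∑ k ∈ Finset.range N, 1 / (x + k) := by
  induction N with
  | zero => simp
  | succ n ih =>
    have hxn : 0 < x + n := by positivity
    have : x + (n + 1 : ℕ) = (x + n) + 1 := by push_cast; ring
    rw [this, digamma_add_one hxn, ih, Finset.sum_range_succ, add_assoc]

lemma tendsto_log_sub (a b : ℝ) :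
    Tendsto (fun n : ℕ => Real.log (a + n) - Real.log (b + n)) atTop (nhds 0) := by
  have h1 : Tendsto (fun n : ℕ => (a + n) / (b + n)) atTop (nhds 1) := by
    have hb : Tendsto (fun n : ℕ => b + (n:ℝ)) atTop atTop :=
      tendsto_atTop_add_const_left _ _ tendsto_natCast_atTop_atTop
    have h2 : Tendsto (fun n : ℕ => (a - b) / (b + n)) atTop (nhds 0) :=
      Tendsto.div_atTop tendsto_const_nhds hb
    have h3 : Tendsto (fun n : ℕ => 1 + (a - b) / (b + n)) atTop (nhds 1) := by
      simpa using (tendsto_const_nhds (x := (1:ℝ))).add h2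
    refine h3.congr' ?_
    filter_upwards [hb.eventually_gt_atTop 0] with n hn
    field_simp
    ring
  have h4 : Tendsto (fun n : ℕ => Real.log ((a + n) / (b + n))) atTop (nhds 0) := by
    have := (Real.continuousAt_log one_ne_zero).tendsto.comp h1
    simpa [Function.comp_def] using this
  refine h4.congr' ?_
  have ha : Tendsto (fun n : ℕ => a + (n:ℝ)) atTop atTop :=
    tendsto_atTop_add_const_left _ _ tendsto_natCast_atTop_atTop
  have hb : Tendsto (fun n : ℕ => b + (n:ℝ)) atTop atTop :=
    tendsto_atTop_add_const_left _ _ tendsto_natCast_atTop_atTop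
  filter_upwards [ha.eventually_gt_atTop 0, hb.eventually_gt_atTop 0] with n h1 h2
  rw [Real.log_div h1.ne' h2.ne']

lemma summable_term {p q : ℝ} (hp : 0 < p) (hq : 0 < q) :
    Summable (fun k : ℕ => 1 / (p + k) - 1 / (q + k)) := by
  set m := min (min p q) 1 with hmdef
  have hm0 : 0 < m := lt_min (lt_min hp hq) one_pos
  have hm1 : m ≤ 1 := min_le_right _ _
  have hmp : m ≤ p := (min_le_left _ _).trans (min_le_left _ _)
  have hmq : m ≤ q := (min_le_left _ _).trans (min_le_right _ _)
  have hs : Summable (fun k : ℕ => |q - p| / (m * m) * (1 / ((k:ℝ) + 1) ^ 2)) := by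
    have h2 : Summable (fun k : ℕ => 1 / ((k:ℝ) + 1) ^ 2) := by
      have h3 := (Real.summable_one_div_nat_pow.mpr (one_lt_two)).comp_injective
        (add_left_injective 1)
      refine h3.congr fun k => ?_
      simp only [Function.comp_apply]
      push_cast
      ring
    exact h2.mul_left _
  refine Summable.of_abs (Summable.of_nonneg_of_le (fun k => abs_nonneg _) (fun k => ?_) hs)
  have hpk : (0:ℝ) < p + k := by positivity
  have hqk : (0:ℝ) < q + k := by positivity
  have e1 : 1 / (p + k) - 1 / (q + k) = (q - p) / ((p + k) * (q + k)) := by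
    field_simp
    ring
  rw [e1, abs_div, abs_of_pos (by positivity : (0:ℝ) < (p + k) * (q + k))]
  rw [div_le_iff₀ (by positivity)]
  have key : m * ((k:ℝ) + 1) ≤ p + k := by nlinarith [Nat.cast_nonneg (α := ℝ) k]
  have key2 : m * ((k:ℝ) + 1) ≤ q + k := by nlinarith [Nat.cast_nonneg (α := ℝ) k]
  have key3 : (m * ((k:ℝ) + 1)) * (m * ((k:ℝ) + 1)) ≤ (p + k) * (q + k) := by
    have h4 : (0:ℝ) < m * ((k:ℝ) + 1) := by positivity
    nlinarith
  have heq : |q - p| = |q - p| / (m * m) * (1 / ((k:ℝ) + 1) ^ 2)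
      * (m * ((k:ℝ) + 1) * (m * ((k:ℝ) + 1))) := by
    have hk1 : ((k:ℝ) + 1) ≠ 0 := by positivity
    field_simp
    try ring
    try simp
  exact heq.le.trans (mul_le_mul_of_nonneg_left key3 (by positivity))

lemma digamma_sub_eq_tsum {p q : ℝ} (hp : 0 < p) (hq : 0 < q) :
    digamma q - digamma p = ∑' k : ℕ, (1 / (p + k) - 1 / (q + k)) := by
  have hsum := summable_term hp hq
  -- partial sums tendsto
  have hps : ∀ N : ℕ, ∑ k ∈ Finset.range N, (1 / (p + k) - 1 / (q + k))
      = (digamma q - digamma p) + (digamma (p + N) - digamma (q + N)) := by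
    intro N
    have h1 := digamma_add_nat hp N
    have h2 := digamma_add_nat hq N
    rw [Finset.sum_sub_distrib]
    have e1 : ∑ k ∈ Finset.range N, 1 / (p + k) = digamma (p + N) - digamma p := by
      rw [h1]; ring
    have e2 : ∑ k ∈ Finset.range N, 1 / (q + k) = digamma (q + N) - digamma q := by
      rw [h2]; ring
    rw [e1, e2]; ring
  -- error tendsto 0
  have herr : Tendsto (fun N : ℕ => digamma (p + N) - digamma (q + N)) atTop (nhds 0) := by
    have hub : ∀ᶠ N : ℕ in atTop, digamma (p + N) - digamma (q + N)
        ≤ Real.log (p + N) - Real.log (q - 1 + N) := by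
      filter_upwards [eventually_ge_atTop 1] with N hN
      have hpN : 0 < p + (N:ℝ) := by positivity
      have hq1N : 0 < q - 1 + (N:ℝ) := by
        have : (1:ℝ) ≤ N := by exact_mod_cast hN
        linarith
      have h1 : digamma (p + N) ≤ Real.log (p + N) := digamma_le_log hpN
      have h2 : Real.log (q - 1 + N) ≤ digamma (q + N) := by
        have := log_le_digamma hq1N
        have e : q - 1 + (N:ℝ) + 1 = q + N := by ring
        rwa [e] at this
      linarith
    have hlb : ∀ᶠ N : ℕ in atTop, Real.log (p - 1 + N) - Real.log (q + N)
        ≤ digamma (p + N) - digamma (q + N) := by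
      filter_upwards [eventually_ge_atTop 1] with N hN
      have hqN : 0 < q + (N:ℝ) := by positivity
      have hp1N : 0 < p - 1 + (N:ℝ) := by
        have : (1:ℝ) ≤ N := by exact_mod_cast hN
        linarith
      have h1 : digamma (q + N) ≤ Real.log (q + N) := digamma_le_log hqN
      have h2 : Real.log (p - 1 + N) ≤ digamma (p + N) := by
        have := log_le_digamma hp1N
        have e : p - 1 + (N:ℝ) + 1 = p + N := by ring
        rwa [e] at this
      linarith
    exact tendsto_of_tendsto_of_tendsto_of_le_of_le' (tendsto_log_sub (p-1) q)
      (tendsto_log_sub p (q-1)) hlb hub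
  have htend : Tendsto (fun N : ℕ => ∑ k ∈ Finset.range N, (1 / (p + k) - 1 / (q + k)))
      atTop (nhds (digamma q - digamma p)) := by
    simp_rw [hps]
    simpa using (tendsto_const_nhds (x := digamma q - digamma p)).add herr
  exact ((hsum.hasSum_iff_tendsto_nat).mpr htend).tsum_eq.symm

section integralside

/-- the substitution map -/
noncomputable def sub1 (t : ℝ) : ℝ := Real.log t - Real.log (1 - t)

lemma sub1_hasDeriv {t : ℝ} (ht : t ∈ Ioo (0:ℝ) 1) :
    HasDerivAt sub1 (1 / (t * (1 - t))) t := by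
  obtain ⟨h0, h1⟩ := ht
  have h1t : (0:ℝ) < 1 - t := by linarith
  have d1 : HasDerivAt (fun y : ℝ => Real.log y) t⁻¹ t := Real.hasDerivAt_log h0.ne'
  have d2 : HasDerivAt (fun y : ℝ => (1 - y)) (-1) t := by
    simpa using (hasDerivAt_id t).const_sub 1
  have d3 : HasDerivAt (fun y : ℝ => Real.log (1 - y)) ((1 - t)⁻¹ * (-1)) t :=
    (Real.hasDerivAt_log h1t.ne').comp t d2
  have d4 := d1.sub d3
  have e : 1 / (t * (1 - t)) = t⁻¹ - (1 - t)⁻¹ * -1 := by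
    field_simp
    ring
  rw [e]
  exact d4

lemma sub1_strictMono : StrictMonoOn sub1 (Ioo (0:ℝ) 1) := by
  intro a ha b hb hab
  have h1 : Real.log a < Real.log b := Real.log_lt_log ha.1 hab
  have h2 : Real.log (1 - b) < Real.log (1 - a) :=
    Real.log_lt_log (by linarith [hb.2]) (by linarith)
  unfold sub1
  linarith

lemma sub1_image : sub1 '' (Ioo (0:ℝ) 1) = univ := by
  apply eq_univ_of_forall
  intro x
  refine ⟨(1 + Real.exp (-x))⁻¹, ?_, ?_⟩
  · constructor
    · positivity
    · have h1 : (1:ℝ) < 1 + Real.exp (-x) := by linarith [Real.exp_pos (-x)]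
      exact inv_lt_one_of_one_lt₀ h1
  · have hE : (0:ℝ) < 1 + Real.exp (-x) := by positivity
    have h1mt : 1 - (1 + Real.exp (-x))⁻¹ = Real.exp (-x) / (1 + Real.exp (-x)) := by
      field_simp
      ring
    unfold sub1
    rw [h1mt, Real.log_inv, Real.log_div (Real.exp_ne_zero _) hE.ne', Real.log_exp]
    ring

lemma comp_sub1 {p t : ℝ} (ht : t ∈ Ioo (0:ℝ) 1) :
    (1 + Real.exp (-sub1 t)) ^ (-p) = t ^ p := by
  obtain ⟨h0, h1⟩ := ht
  have h1t : (0:ℝ) < 1 - t := by linarith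
  have e1 : Real.exp (-sub1 t) = (1 - t) / t := by
    unfold sub1
    rw [neg_sub, Real.exp_sub, Real.exp_log h1t, Real.exp_log h0]
  have e2 : 1 + Real.exp (-sub1 t) = t⁻¹ := by
    rw [e1]; field_simp; ring
  rw [e2, Real.inv_rpow h0.le, Real.rpow_neg h0.le, inv_inv]



lemma tsum_pointwise {p q t : ℝ} (hp : 0 < p) (hq : 0 < q) (ht : t ∈ Ioo (0:ℝ) 1) :
    ∑' k : ℕ, (t ^ (p - 1 + k) - t ^ (q - 1 + k))
      = (1 / (t * (1 - t))) * (t ^ p - t ^ q) := by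
  obtain ⟨h0, h1⟩ := ht
  have hgeo : ∑' k : ℕ, t ^ (k:ℕ) = (1 - t)⁻¹ := tsum_geometric_of_lt_one h0.le h1
  have e1 : ∀ k : ℕ, t ^ (p - 1 + k) - t ^ (q - 1 + k)
      = (t ^ (p-1) - t ^ (q-1)) * t ^ (k:ℕ) := by
    intro k
    rw [Real.rpow_add h0, Real.rpow_add h0, Real.rpow_natCast]
    ring
  rw [tsum_congr e1, tsum_mul_left, hgeo]
  have e2 : t ^ (p - 1) = t ^ p * t⁻¹ := by
    rw [sub_eq_add_neg, Real.rpow_add h0, Real.rpow_neg_one]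
  have e3 : t ^ (q - 1) = t ^ q * t⁻¹ := by
    rw [sub_eq_add_neg, Real.rpow_add h0, Real.rpow_neg_one]
  rw [e2, e3]
  have h1t : (0:ℝ) < 1 - t := by linarith
  field_simp
  try ring

lemma integrableOn_rpow_Ioo {e : ℝ} (he : -1 < e) :
    IntegrableOn (fun t : ℝ => t ^ e) (Ioo (0:ℝ) 1) volume := by
  have h := intervalIntegral.intervalIntegrable_rpow' (a := 0) (b := 1) he
  rw [intervalIntegrable_iff_integrableOn_Ioc_of_le zero_le_one] at h
  exact h.mono_set Ioo_subset_Ioc_self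

lemma integral_rpow_Ioo {e : ℝ} (he : -1 < e) :
    ∫ t in Ioo (0:ℝ) 1, t ^ e = 1 / (e + 1) := by
  rw [← integral_Ioc_eq_integral_Ioo, ← intervalIntegral.integral_of_le zero_le_one,
    integral_rpow (Or.inl he), Real.one_rpow, Real.zero_rpow (by linarith : e + 1 ≠ 0)]
  ring

lemma main_le {p q : ℝ} (hp : 0 < p) (hq : 0 < q) (hpq : p ≤ q) :
    ∫ x : ℝ, ((1 + Real.exp (-x)) ^ (-p) - (1 + Real.exp (-x)) ^ (-q))
      = digamma q - digamma p := by
  set g : ℝ → ℝ := fun x => (1 + Real.exp (-x)) ^ (-p) - (1 + Real.exp (-x)) ^ (-q) with hg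
  set F : ℕ → ℝ → ℝ := fun k t => t ^ (p - 1 + k) - t ^ (q - 1 + k) with hF
  have hIk : ∀ k : ℕ, ∫ t in Ioo (0:ℝ) 1, F k t = 1 / (p + k) - 1 / (q + k) := by
    intro k
    have hp' : (-1:ℝ) < p - 1 + k := by
      have : (0:ℝ) ≤ k := Nat.cast_nonneg k
      linarith
    have hq' : (-1:ℝ) < q - 1 + k := by
      have : (0:ℝ) ≤ k := Nat.cast_nonneg k
      linarith
    rw [hF]
    rw [integral_sub (integrableOn_rpow_Ioo hp') (integrableOn_rpow_Ioo hq'),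
      integral_rpow_Ioo hp', integral_rpow_Ioo hq']
    have e1 : p - 1 + k + 1 = p + k := by ring
    have e2 : q - 1 + k + 1 = q + k := by ring
    rw [e1, e2]
  have hInt : ∀ k : ℕ, IntegrableOn (F k) (Ioo (0:ℝ) 1) volume := by
    intro k
    have hp' : (-1:ℝ) < p - 1 + k := by
      have : (0:ℝ) ≤ k := Nat.cast_nonneg k
      linarith
    have hq' : (-1:ℝ) < q - 1 + k := by
      have : (0:ℝ) ≤ k := Nat.cast_nonneg k
      linarith
    exact (integrableOn_rpow_Ioo hp').sub (integrableOn_rpow_Ioo hq')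
  have hnn : ∀ k : ℕ, ∀ t ∈ Ioo (0:ℝ) 1, 0 ≤ F k t := by
    intro k t ht
    have := Real.rpow_le_rpow_of_exponent_ge ht.1 ht.2.le
      (by linarith : q - 1 + (k:ℝ) ≥ p - 1 + k)
    simpa [hF] using sub_nonneg.mpr this
  have hterm_nn : ∀ k : ℕ, 0 ≤ 1 / (p + (k:ℝ)) - 1 / (q + k) := by
    intro k
    have h1 : (0:ℝ) < p + k := by positivity
    have h2 : (0:ℝ) < q + k := by positivity
    have : 1 / (q + (k:ℝ)) ≤ 1 / (p + k) := by
      apply one_div_le_one_div_of_le h1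
      linarith
    linarith
  have h1 : ∫ x : ℝ, g x = ∫ x in sub1 '' (Ioo (0:ℝ) 1), g x := by
    rw [sub1_image, setIntegral_univ]
  have h2 : ∫ x in sub1 '' (Ioo (0:ℝ) 1), g x
      = ∫ t in Ioo (0:ℝ) 1, |1 / (t * (1 - t))| • g (sub1 t) :=
    integral_image_eq_integral_abs_deriv_smul measurableSet_Ioo
      (fun t ht => (sub1_hasDeriv ht).hasDerivWithinAt) sub1_strictMono.injOn g
  have h3 : ∀ t ∈ Ioo (0:ℝ) 1, |1 / (t * (1 - t))| • g (sub1 t)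
      = ∑' k : ℕ, F k t := by
    intro t ht
    rw [tsum_pointwise hp hq ht, hg]
    simp only [smul_eq_mul]
    rw [comp_sub1 ht, comp_sub1 ht,
      abs_of_pos (by
        have h0 : (0:ℝ) < t * (1 - t) := mul_pos ht.1 (by linarith [ht.2])
        positivity : (0:ℝ) < 1 / (t * (1 - t)))]
  have h4 : ∫ t in Ioo (0:ℝ) 1, |1 / (t * (1 - t))| • g (sub1 t)
      = ∫ t in Ioo (0:ℝ) 1, ∑' k : ℕ, F k t :=
    setIntegral_congr_fun measurableSet_Ioo h3
  have h5 : ∫ t in Ioo (0:ℝ) 1, ∑' k : ℕ, F k t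
      = ∑' k : ℕ, ∫ t in Ioo (0:ℝ) 1, F k t := by
    apply integral_tsum
    · intro k
      exact ((by fun_prop : Measurable (F k))).aestronglyMeasurable
    · have hlint : ∀ k : ℕ, ∫⁻ t in Ioo (0:ℝ) 1, ‖F k t‖ₑ
          = ENNReal.ofReal (1 / (p + k) - 1 / (q + k)) := by
        intro k
        rw [← hIk k,
          ofReal_integral_eq_lintegral_ofReal (hInt k)
            ((ae_restrict_mem measurableSet_Ioo).mono (hnn k))]
        apply lintegral_congr_ae
        filter_upwards [ae_restrict_mem measurableSet_Ioo] with t ht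
        rw [Real.enorm_eq_ofReal (hnn k t ht)]
      simp_rw [hlint]
      rw [← ENNReal.ofReal_tsum_of_nonneg hterm_nn (summable_term hp hq)]
      exact ENNReal.ofReal_ne_top
  rw [h1, h2, h4, h5, tsum_congr hIk, digamma_sub_eq_tsum hp hq]

theorem integral_one_add_exp_neg_rpow_sub (p q : ℝ) (hp : 0 < p) (hq : 0 < q) :
    ∫ x : ℝ, ((1 + Real.exp (-x)) ^ (-p) - (1 + Real.exp (-x)) ^ (-q))
      = digamma q - digamma p := by
  rcases le_total p q with h | h
  · exact main_le hp hq h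
  · have key := main_le hq hp h
    have e1 : (fun x : ℝ => (1 + Real.exp (-x)) ^ (-p) - (1 + Real.exp (-x)) ^ (-q))
        = fun x : ℝ => -((1 + Real.exp (-x)) ^ (-q) - (1 + Real.exp (-x)) ^ (-p)) := by
      funext x; ring
    rw [e1, integral_neg, key]
    ring
end integralside
end

section
/- For all real numbers a > 0, b > 0 and p > 0, ∫_0^∞ (1 - e^{-ax})(1 - e^{-bx}) e^{-px}/(1 - e^{-x}) dx = ψ(p+a) + ψ(p+b) - ψ(p+a+b) - ψ(p). -/
open MeasureTheory Real

namespace DigammaAux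

open Set Filter Topology

noncomputable def f : ℝ → ℝ := Real.log ∘ Real.Gamma

lemma ne_neg_nat {x : ℝ} (hx : 0 < x) (m : ℕ) : x ≠ -m :=
  ne_of_gt (lt_of_le_of_lt (neg_nonpos.mpr (Nat.cast_nonneg m)) hx)

lemma hder {x : ℝ} (hx : 0 < x) : DifferentiableAt ℝ f x :=
  ((Real.differentiableAt_Gamma (ne_neg_nat hx)).log (Real.Gamma_ne_zero (ne_neg_nat hx)))

lemma digamma_eq_deriv_f {x : ℝ} (hx : 0 < x) : digamma x = deriv f x := by
  rw [digamma, f, Function.comp_def,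
    deriv.log (Real.differentiableAt_Gamma (ne_neg_nat hx))
      (Real.Gamma_pos_of_pos hx).ne']

lemma f_rec {x : ℝ} (hx : 0 < x) : f (x + 1) = f x + Real.log x := by
  simp only [f, Function.comp_apply, Real.Gamma_add_one hx.ne',
    Real.log_mul hx.ne' (Real.Gamma_pos_of_pos hx).ne', add_comm]

lemma deriv_f_rec {x : ℝ} (hx : 0 < x) : deriv f (x + 1) = deriv f x + 1 / x := by
  rw [← deriv_comp_add_const, one_div, ← Real.deriv_log,
    ← deriv_add (hder <| by positivity) (Real.differentiableAt_log hx.ne')]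
  apply Filter.EventuallyEq.deriv_eq
  filter_upwards [eventually_gt_nhds hx] using fun y hy => f_rec hy

lemma deriv_f_nat (x : ℝ) (hx : 0 < x) (n : ℕ) :
    deriv f (x + n) = deriv f x + ∑ k ∈ Finset.range n, 1 / (x + k) := by
  induction n with
  | zero => simp
  | succ n ih =>
      have : x + (n + 1 : ℕ) = (x + n) + 1 := by push_cast; ring
      rw [this, deriv_f_rec (by positivity), ih, Finset.sum_range_succ]
      ring

lemma deriv_f_le {x : ℝ} (hx : 0 < x) : deriv f x ≤ Real.log x := by
  have hc : ConvexOn ℝ (Ioi 0) f := Real.convexOn_log_Gamma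
  have h := hc.deriv_le_slope (mem_Ioi.mpr hx) (mem_Ioi.mpr (by linarith : (0:ℝ) < x + 1))
    (by linarith) (hder hx)
  rwa [slope_def_field, add_sub_cancel_left, div_one, f_rec hx, add_sub_cancel_left] at h

lemma le_deriv_f {x : ℝ} (hx : 1 < x) : Real.log (x - 1) ≤ deriv f x := by
  have hx0 : (0:ℝ) < x - 1 := by linarith
  have hc : ConvexOn ℝ (Ioi 0) f := Real.convexOn_log_Gamma
  have h := hc.slope_le_deriv (mem_Ioi.mpr hx0) (mem_Ioi.mpr (by linarith : (0:ℝ) < x))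
    (by linarith) (hder (by linarith))
  have hfx := f_rec hx0
  rw [sub_add_cancel] at hfx
  rwa [slope_def_field, sub_sub_cancel, div_one, hfx, add_sub_cancel_left] at h

lemma log_ratio_tendsto (c d : ℝ) :
    Filter.Tendsto (fun n : ℕ => Real.log (c + n) - Real.log (d + n)) atTop (𝓝 0) := by
  have hd : Filter.Tendsto (fun n : ℕ => d + (n:ℝ)) atTop atTop :=
    tendsto_atTop_add_const_left atTop d tendsto_natCast_atTop_atTop
  have hc' : Filter.Tendsto (fun n : ℕ => c + (n:ℝ)) atTop atTop :=
    tendsto_atTop_add_const_left atTop c tendsto_natCast_atTop_atTop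
  have hratio : Filter.Tendsto (fun n : ℕ => (c + n) / (d + n)) atTop (𝓝 1) := by
    have h0 : Filter.Tendsto (fun n : ℕ => (c - d) / (d + n)) atTop (𝓝 0) :=
      Filter.Tendsto.div_atTop tendsto_const_nhds hd
    have := h0.const_add (1:ℝ)
    rw [add_zero] at this
    apply this.congr'
    filter_upwards [hd.eventually_gt_atTop 0] with n hn
    field_simp
    ring
  have heq : ∀ᶠ n : ℕ in atTop, Real.log ((c + n) / (d + n)) =
      Real.log (c + n) - Real.log (d + n) := by
    filter_upwards [hc'.eventually_gt_atTop 0, hd.eventually_gt_atTop 0] with n h1 h2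
    exact Real.log_div h1.ne' h2.ne'
  have := (Real.continuousAt_log one_ne_zero).tendsto.comp hratio
  rw [Real.log_one] at this
  exact this.congr' heq

/-- The key series representation: for `0 < p ≤ q`,
`ψ q - ψ p = ∑ (1/(p+n) - 1/(q+n))`. -/
lemma hasSum_digamma_sub {p q : ℝ} (hp : 0 < p) (hpq : p ≤ q) :
    HasSum (fun n : ℕ => 1 / (p + n) - 1 / (q + n)) (digamma q - digamma p) := by
  have hq : 0 < q := lt_of_lt_of_le hp hpq
  rw [digamma_eq_deriv_f hq, digamma_eq_deriv_f hp]
  have hnonneg : ∀ n : ℕ, 0 ≤ 1 / (p + n) - 1 / (q + n) := fun n => by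
    have h1 : (0:ℝ) < p + n := by positivity
    have : 1 / (q + n) ≤ 1 / (p + n) := by
      apply one_div_le_one_div_of_le h1; linarith
    linarith
  rw [hasSum_iff_tendsto_nat_of_nonneg hnonneg]
  have key : ∀ n : ℕ, ∑ i ∈ Finset.range n, (1 / (p + i) - 1 / (q + i)) =
      (deriv f q - deriv f p) + (deriv f (p + n) - deriv f (q + n)) := by
    intro n
    have h1 := deriv_f_nat p hp n
    have h2 := deriv_f_nat q hq n
    rw [Finset.sum_sub_distrib]
    rw [show ∑ k ∈ Finset.range n, 1 / (p + (k:ℝ)) = deriv f (p + n) - deriv f p by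
      rw [h1]; ring]
    rw [show ∑ k ∈ Finset.range n, 1 / (q + (k:ℝ)) = deriv f (q + n) - deriv f q by
      rw [h2]; ring]
    ring
  simp only [key]
  have h0 : Tendsto (fun n : ℕ => deriv f (p + n) - deriv f (q + n)) atTop (𝓝 0) := by
    have hub : ∀ᶠ n : ℕ in atTop, deriv f (p + n) - deriv f (q + n) ≤
        Real.log (p + n) - Real.log ((q - 1) + n) := by
      filter_upwards [eventually_ge_atTop 2] with n hn
      have hn2 : (2:ℝ) ≤ (n:ℝ) := by exact_mod_cast hn
      have h1 : deriv f (p + n) ≤ Real.log (p + n) := deriv_f_le (by positivity)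
      have h2 : Real.log (q + n - 1) ≤ deriv f (q + n) := le_deriv_f (by linarith)
      have h3 : (q - 1) + (n:ℝ) = q + n - 1 := by ring
      rw [h3]; linarith
    have hlb : ∀ᶠ n : ℕ in atTop, Real.log ((p - 1) + n) - Real.log (q + n) ≤
        deriv f (p + n) - deriv f (q + n) := by
      filter_upwards [eventually_ge_atTop 2] with n hn
      have hn2 : (2:ℝ) ≤ (n:ℝ) := by exact_mod_cast hn
      have h1 : Real.log (p + n - 1) ≤ deriv f (p + n) := le_deriv_f (by linarith)
      have h2 : deriv f (q + n) ≤ Real.log (q + n) := deriv_f_le (by positivity)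
      have h3 : (p - 1) + (n:ℝ) = p + n - 1 := by ring
      rw [h3]; linarith
    exact tendsto_of_tendsto_of_tendsto_of_le_of_le' (log_ratio_tendsto (p-1) q)
      (log_ratio_tendsto p (q-1)) hlb hub
  have := h0.const_add (deriv f q - deriv f p)
  simpa using this


lemma integral_exp_neg_mul_Ioi {c : ℝ} (hc : 0 < c) :
    ∫ t in Ioi (0:ℝ), Real.exp (-(c * t)) = 1 / c := by
  have := integral_comp_mul_left_Ioi (fun y => Real.exp (-y)) 0 hc
  simp only [mul_zero, integral_exp_neg_Ioi, neg_zero, Real.exp_zero, smul_eq_mul,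
    mul_one] at this
  rw [this, one_div]

lemma integrableOn_exp_neg_mul {c : ℝ} (hc : 0 < c) :
    IntegrableOn (fun t => Real.exp (-(c * t))) (Ioi (0:ℝ)) := by
  have := exp_neg_integrableOn_Ioi 0 hc
  simpa [neg_mul] using this

/-- Gauss-type integral: for `0 < p < q`,
`∫ (e^{-pt} - e^{-qt})/(1-e^{-t}) dt = ψ q - ψ p`, together with integrability. -/
lemma integral_frullani_like {p q : ℝ} (hp : 0 < p) (hpq : p < q) :
    IntegrableOn (fun t => (Real.exp (-(p * t)) - Real.exp (-(q * t))) / (1 - Real.exp (-t)))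
      (Ioi (0:ℝ)) ∧
    ∫ t in Ioi (0:ℝ), (Real.exp (-(p * t)) - Real.exp (-(q * t))) / (1 - Real.exp (-t))
      = digamma q - digamma p := by
  have hq : 0 < q := hp.trans hpq
  set g : ℝ → ℝ := fun t => (Real.exp (-(p * t)) - Real.exp (-(q * t))) / (1 - Real.exp (-t))
    with hg
  set F : ℕ → ℝ → ℝ := fun n t => Real.exp (-((p + n) * t)) - Real.exp (-((q + n) * t))
    with hF
  set c : ℕ → ℝ := fun n => 1 / (p + n) - 1 / (q + n) with hc
  have hsum : HasSum c (digamma q - digamma p) := hasSum_digamma_sub hp hpq.le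
  have hcnn : ∀ n, 0 ≤ c n := fun n => by
    have h1 : (0:ℝ) < p + n := by positivity
    have : 1 / (q + n) ≤ 1 / (p + n) := by
      apply one_div_le_one_div_of_le h1; linarith
    simp only [hc]
    linarith
  -- each F n is integrable with integral c n
  have hFint : ∀ n : ℕ, IntegrableOn (F n) (Ioi (0:ℝ)) := fun n =>
    (integrableOn_exp_neg_mul (by positivity : (0:ℝ) < p + n)).sub
      (integrableOn_exp_neg_mul (by positivity : (0:ℝ) < q + n))
  have hFval : ∀ n : ℕ, ∫ t in Ioi (0:ℝ), F n t = c n := fun n => by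
    rw [hF, hc]
    rw [integral_sub (integrableOn_exp_neg_mul (by positivity : (0:ℝ) < p + n))
      (integrableOn_exp_neg_mul (by positivity : (0:ℝ) < q + n)),
      integral_exp_neg_mul_Ioi (by positivity : (0:ℝ) < p + n),
      integral_exp_neg_mul_Ioi (by positivity : (0:ℝ) < q + n)]
  have hFnn : ∀ n : ℕ, ∀ t ∈ Ioi (0:ℝ), 0 ≤ F n t := fun n t ht => by
    have ht' : (0:ℝ) < t := ht
    have : -((q + n) * t) ≤ -((p + n) * t) := by nlinarith
    simpa [hF] using Real.exp_le_exp.mpr this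
  -- pointwise sum
  have hptsum : ∀ t ∈ Ioi (0:ℝ), HasSum (fun n => F n t) (g t) := by
    intro t ht
    have ht' : (0:ℝ) < t := ht
    have hr0 : (0:ℝ) ≤ Real.exp (-t) := (Real.exp_pos _).le
    have hr1 : Real.exp (-t) < 1 := by
      rw [Real.exp_lt_one_iff]; linarith
    have hgeo := (hasSum_geometric_of_lt_one hr0 hr1).mul_left
      (Real.exp (-(p * t)) - Real.exp (-(q * t)))
    have heq : ∀ n : ℕ, (Real.exp (-(p * t)) - Real.exp (-(q * t))) * Real.exp (-t) ^ n
        = F n t := by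
      intro n
      rw [← Real.exp_nat_mul]
      rw [hF]
      simp only []
      rw [show -((p + n) * t) = -(p * t) + n * -t by ring,
        show -((q + n) * t) = -(q * t) + n * -t by ring, Real.exp_add, Real.exp_add]
      ring
    have hfun : (fun n : ℕ => (Real.exp (-(p * t)) - Real.exp (-(q * t)))
        * Real.exp (-t) ^ n) = fun n => F n t := funext heq
    rw [hfun] at hgeo
    have : g t = (Real.exp (-(p * t)) - Real.exp (-(q * t))) * (1 - Real.exp (-t))⁻¹ := by
      simp only [hg, div_eq_mul_inv]
    rwa [this]
  have hgnn : ∀ t ∈ Ioi (0:ℝ), 0 ≤ g t := by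
    intro t ht
    have ht' : (0:ℝ) < t := ht
    have h1 : Real.exp (-(q * t)) ≤ Real.exp (-(p * t)) :=
      Real.exp_le_exp.mpr (by nlinarith)
    have h2 : Real.exp (-t) < 1 := by rw [Real.exp_lt_one_iff]; linarith
    exact div_nonneg (by linarith) (by linarith)
  have hgcont : ContinuousOn g (Ioi (0:ℝ)) := by
    apply ContinuousOn.div
    · fun_prop
    · fun_prop
    · intro t ht
      have ht' : (0:ℝ) < t := ht
      have h2 : Real.exp (-t) < 1 := by rw [Real.exp_lt_one_iff]; linarith
      exact ne_of_gt (by linarith)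
  have hmeas : AEStronglyMeasurable g (volume.restrict (Ioi (0:ℝ))) :=
    hgcont.aestronglyMeasurable measurableSet_Ioi
  have hgnn_ae : 0 ≤ᵐ[volume.restrict (Ioi (0:ℝ))] g :=
    (ae_restrict_iff' measurableSet_Ioi).mpr (Filter.Eventually.of_forall hgnn)
  have hlin : ∫⁻ t in Ioi (0:ℝ), ENNReal.ofReal (g t)
      = ENNReal.ofReal (digamma q - digamma p) := by
    have h1 : ∫⁻ t in Ioi (0:ℝ), ENNReal.ofReal (g t)
        = ∫⁻ t in Ioi (0:ℝ), ∑' n, ENNReal.ofReal (F n t) := by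
      apply setLIntegral_congr_fun measurableSet_Ioi
      intro t ht
      beta_reduce
      rw [← ENNReal.ofReal_tsum_of_nonneg (fun n => hFnn n t ht) (hptsum t ht).summable,
        (hptsum t ht).tsum_eq]
    have h2 : ∫⁻ t in Ioi (0:ℝ), ∑' n, ENNReal.ofReal (F n t)
        = ∑' n, ∫⁻ t in Ioi (0:ℝ), ENNReal.ofReal (F n t) :=
      lintegral_tsum fun n =>
        (ENNReal.measurable_ofReal.comp (Continuous.measurable (by fun_prop))).aemeasurable
    have h3 : ∀ n, ∫⁻ t in Ioi (0:ℝ), ENNReal.ofReal (F n t) = ENNReal.ofReal (c n) := by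
      intro n
      rw [← ofReal_integral_eq_lintegral_ofReal (hFint n)
        ((ae_restrict_iff' measurableSet_Ioi).mpr (Filter.Eventually.of_forall (hFnn n))),
        hFval n]
    rw [h1, h2]
    simp only [h3]
    rw [← ENNReal.ofReal_tsum_of_nonneg hcnn hsum.summable, hsum.tsum_eq]
  have hd : 0 ≤ digamma q - digamma p := by
    rw [← hsum.tsum_eq]; exact tsum_nonneg hcnn
  have hint : IntegrableOn g (Ioi (0:ℝ)) :=
    ⟨hmeas, (hasFiniteIntegral_iff_ofReal hgnn_ae).mpr
      (by rw [hlin]; exact ENNReal.ofReal_lt_top)⟩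
  refine ⟨hint, ?_⟩
  rw [MeasureTheory.integral_eq_lintegral_of_nonneg_ae hgnn_ae hmeas, hlin,
    ENNReal.toReal_ofReal hd]

end DigammaAux

theorem integral_one_sub_exp_mul_one_sub_exp_mul_exp_div (a b p : ℝ)
    (ha : 0 < a) (hb : 0 < b) (hp : 0 < p) :
    ∫ x in Set.Ioi (0 : ℝ),
        (1 - Real.exp (-(a * x))) * (1 - Real.exp (-(b * x))) * Real.exp (-(p * x))
          / (1 - Real.exp (-x))
      = digamma (p + a) + digamma (p + b) - digamma (p + a + b) - digamma p := by
  have h1 := DigammaAux.integral_frullani_like hp (show p < p + a by linarith)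
  have h2 := DigammaAux.integral_frullani_like (show (0:ℝ) < p + b by linarith)
    (show p + b < p + a + b by linarith)
  have heq : Set.EqOn
      (fun x => (1 - Real.exp (-(a * x))) * (1 - Real.exp (-(b * x))) * Real.exp (-(p * x))
        / (1 - Real.exp (-x)))
      (fun x => (Real.exp (-(p * x)) - Real.exp (-((p + a) * x))) / (1 - Real.exp (-x))
        - (Real.exp (-((p + b) * x)) - Real.exp (-((p + a + b) * x))) / (1 - Real.exp (-x)))
      (Set.Ioi (0:ℝ)) := by
    intro x hx
    simp only []
    rw [div_sub_div_same]
    congr 1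
    rw [show -((p+a)*x) = -(a*x) + -(p*x) by ring, show -((p+b)*x) = -(b*x) + -(p*x) by ring,
      show -((p+a+b)*x) = -(a*x) + (-(b*x) + -(p*x)) by ring, Real.exp_add, Real.exp_add,
      Real.exp_add, Real.exp_add]
    ring
  rw [MeasureTheory.setIntegral_congr_fun measurableSet_Ioi heq,
    MeasureTheory.integral_sub h1.1 h2.1, h1.2, h2.2]
  ring
end
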